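/- Fix σ > 0, σ_J > 0, Γ > 0, p_th > 0 and P > p_th, with P = p_th·(σ_J²·Γ + 1). Define R(p, γ) = log₂(1 + p·σ²/(2·(1 + γ·σ_J²) + (1 + γ·σ_J²)²/(p·σ²))) for p > 0, γ ≥ 0, and the leader payoff f(p) = R(p, 0) if 0 < p ≤ p_th and f(p) = R(p, Γ) if p_th < p ≤ P. Then f(p_th) = f(P), f(p) < f(p_th) for every p ∈ (0, P] with p ∉ {p_th, P}, and hence the maximizers of f over (0, P] are exactly the two points p_th and P. -/

import Mathlib

private lemma arg_rw (s c : ℝ) (hs : 0 < s) (hc : 0 < c) :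
    s / (2 * c + c ^ 2 / s) = s ^ 2 / (2 * c * s + c ^ 2) := by
  field_simp

private lemma arg_lt (s c t d : ℝ) (hs : 0 < s) (hc : 0 < c) (ht : 0 < t) (hd : 0 < d)
    (h : s * d < t * c) :
    s ^ 2 / (2 * c * s + c ^ 2) < t ^ 2 / (2 * d * t + d ^ 2) := by
  rw [div_lt_div_iff₀ (by positivity) (by positivity)]
  nlinarith [mul_pos (sub_pos.2 h) (show (0:ℝ) < t * c + s * d + 2 * s * t by positivity)]

private lemma arg_eq (s c t d : ℝ) (hs : 0 < s) (hc : 0 < c) (ht : 0 < t) (hd : 0 < d)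
    (h : s * d = t * c) :
    s ^ 2 / (2 * c * s + c ^ 2) = t ^ 2 / (2 * d * t + d ^ 2) := by
  rw [div_eq_div_iff (by positivity) (by positivity)]
  linear_combination (t * c + s * d + 2 * s * t) * h

/-- The boundary case `P = p_th(σ_J²Γ + 1)` of Theorem 1, with two Stackelberg
equilibria: the leader payoff `f(p) = R(p,0)` for `p ≤ p_th` and `f(p) = R(p,Γ)` for
`p > p_th` satisfies `f(p_th) = f(P)`, every other point of `(0, P]` gives a strictly
smaller payoff, and the set of maximizers of `f` over `(0, P]` is exactly `{p_th, P}`. -/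
theorem stackelberg_two_equilibria
    (σ σJ Γ pth P : ℝ) (hσ : 0 < σ) (hσJ : 0 < σJ) (hΓ : 0 < Γ) (hpth : 0 < pth)
    (hPpth : pth < P) (hcrit : P = pth * (σJ ^ 2 * Γ + 1))
    (R : ℝ → ℝ → ℝ)
    (hR : ∀ p γ, R p γ = Real.logb 2
      (1 + p * σ ^ 2 / (2 * (1 + γ * σJ ^ 2) + (1 + γ * σJ ^ 2) ^ 2 / (p * σ ^ 2))))
    (f : ℝ → ℝ) (hf : ∀ p, f p = if p ≤ pth then R p 0 else R p Γ) :
    f pth = f P ∧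
    (∀ p ∈ Set.Ioc (0 : ℝ) P, p ≠ pth → p ≠ P → f p < f pth) ∧
    {p ∈ Set.Ioc (0 : ℝ) P | ∀ q ∈ Set.Ioc (0 : ℝ) P, f q ≤ f p} = {pth, P} := by
  have hc : (0:ℝ) < 1 + Γ * σJ ^ 2 := by positivity
  -- normalize R on the two branches
  have hR0 : ∀ p : ℝ, 0 < p → R p 0 =
      Real.logb 2 (1 + (p * σ ^ 2) ^ 2 / (2 * 1 * (p * σ ^ 2) + 1 ^ 2)) := by
    intro p hp
    have hps : p * σ ^ 2 > 0 := by positivity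
    have h2 : (2:ℝ) * 1 + 1 ^ 2 / (p * σ ^ 2) > 0 := by positivity
    rw [hR]
    congr 1
    rw [show (1:ℝ) + 0 * σJ ^ 2 = 1 by ring]
    field_simp
  have hRΓ : ∀ p : ℝ, 0 < p → R p Γ =
      Real.logb 2 (1 + (p * σ ^ 2) ^ 2 /
        (2 * (1 + Γ * σJ ^ 2) * (p * σ ^ 2) + (1 + Γ * σJ ^ 2) ^ 2)) := by
    intro p hp
    rw [hR, arg_rw _ _ (by positivity) hc]
  -- f at pth and P
  have hfpth : f pth =
      Real.logb 2 (1 + (pth * σ ^ 2) ^ 2 / (2 * 1 * (pth * σ ^ 2) + 1 ^ 2)) := by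
    rw [hf, if_pos le_rfl, hR0 _ hpth]
  have hP0 : 0 < P := hpth.trans hPpth
  have hfP : f P = Real.logb 2 (1 + (P * σ ^ 2) ^ 2 /
      (2 * (1 + Γ * σJ ^ 2) * (P * σ ^ 2) + (1 + Γ * σJ ^ 2) ^ 2)) := by
    rw [hf, if_neg (not_le.2 hPpth), hRΓ _ hP0]
  have hkey : P * σ ^ 2 * 1 = pth * σ ^ 2 * (1 + Γ * σJ ^ 2) := by
    rw [hcrit]; ring
  have heq : f pth = f P := by
    rw [hfpth, hfP,
      arg_eq (pth * σ ^ 2) 1 (P * σ ^ 2) (1 + Γ * σJ ^ 2)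
        (by positivity) one_pos (by positivity) hc (by linarith [hkey])]
  -- strict inequality elsewhere
  have hstrict : ∀ p ∈ Set.Ioc (0 : ℝ) P, p ≠ pth → p ≠ P → f p < f pth := by
    rintro p ⟨hp0, hpP⟩ hne1 hne2
    have hb : (1:ℝ) < 2 := one_lt_two
    rcases le_or_gt p pth with hle | hgt
    · have hlt : p < pth := lt_of_le_of_ne hle hne1
      rw [hf, if_pos hle, hR0 _ hp0, hfpth]
      apply Real.logb_lt_logb hb (by positivity)
      have := arg_lt (p * σ ^ 2) 1 (pth * σ ^ 2) 1 (by positivity) one_pos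
        (by positivity) one_pos
        (by nlinarith [mul_lt_mul_of_pos_right hlt (show (0:ℝ) < σ ^ 2 by positivity)])
      linarith
    · have hltP : p < P := lt_of_le_of_ne hpP hne2
      rw [hf, if_neg (not_le.2 hgt), hRΓ _ hp0, hfpth]
      apply Real.logb_lt_logb hb (by positivity)
      have hlt2 : p * σ ^ 2 * 1 < pth * σ ^ 2 * (1 + Γ * σJ ^ 2) := by
        rw [← hkey]
        have : p * σ ^ 2 < P * σ ^ 2 :=
          mul_lt_mul_of_pos_right hltP (by positivity)
        linarith
      have := arg_lt (p * σ ^ 2) (1 + Γ * σJ ^ 2) (pth * σ ^ 2) 1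
        (by positivity) hc (by positivity) one_pos hlt2
      linarith
  refine ⟨heq, hstrict, ?_⟩
  have hmax : ∀ q ∈ Set.Ioc (0 : ℝ) P, f q ≤ f pth := by
    intro q hq
    by_cases h1 : q = pth
    · subst h1; exact le_rfl
    by_cases h2 : q = P
    · subst h2; exact heq.ge
    exact (hstrict q hq h1 h2).le
  ext p
  simp only [Set.mem_setOf_eq, Set.mem_insert_iff, Set.mem_singleton_iff]
  constructor
  · rintro ⟨hpmem, hpmax⟩
    by_contra hcon
    push_neg at hcon
    exact absurd (hpmax pth ⟨hpth, hPpth.le⟩) (not_le.2 (hstrict p hpmem hcon.1 hcon.2))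
  · rintro (rfl | rfl)
    · exact ⟨⟨hpth, hPpth.le⟩, hmax⟩
    · exact ⟨⟨hP0, le_rfl⟩, fun q hq => (hmax q hq).trans heq.le⟩
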